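/- For (u,v) and (u′,v′) in S⁷ (i.e., |u|² + |v|² = 1 = |u′|² + |v′|²), one has h(u,v) = h(u′,v′) if and only if there exists a quaternion z with |z| = 1 such that u′ = u·z and v′ = v·z. -/

import Mathlib

open scoped Quaternion

/-- The quaternionic Hopf map `h(u,v) = (2·u·conj(v), |u|² − |v|²)`. -/
noncomputable def hopf (p : ℍ[ℝ] × ℍ[ℝ]) : ℍ[ℝ] × ℝ :=
  (2 * (p.1 * star p.2), ‖p.1‖ ^ 2 - ‖p.2‖ ^ 2)

/-- For `(u,v)` and `(u′,v′)` in `S⁷`, one has `h(u,v) = h(u′,v′)` if and only if there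
exists a quaternion `z` with `|z| = 1` such that `u′ = u·z` and `v′ = v·z`. -/
theorem hopf_eq_iff_unit_quaternion (u v u' v' : ℍ[ℝ])
    (huv : ‖u‖ ^ 2 + ‖v‖ ^ 2 = 1) (huv' : ‖u'‖ ^ 2 + ‖v'‖ ^ 2 = 1) :
    hopf (u, v) = hopf (u', v') ↔
      ∃ z : ℍ[ℝ], ‖z‖ = 1 ∧ u' = u * z ∧ v' = v * z := by
  constructor
  · intro h
    have h1 : u * star v = u' * star v' := by
      have := congrArg Prod.fst h
      simp only [hopf] at this
      have h2 : (2 : ℍ[ℝ]) ≠ 0 := by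
        rw [show (2:ℍ[ℝ]) = ((2:ℝ):ℍ[ℝ]) by norm_cast, ne_eq, ← Quaternion.coe_zero,
          Quaternion.coe_inj]
        norm_num
      exact mul_left_cancel₀ h2 this
    have h2 : ‖u‖ ^ 2 - ‖v‖ ^ 2 = ‖u'‖ ^ 2 - ‖v'‖ ^ 2 := congrArg Prod.snd h
    have hu : ‖u‖ = ‖u'‖ := by nlinarith [norm_nonneg u, norm_nonneg u']
    have hv : ‖v‖ = ‖v'‖ := by nlinarith [norm_nonneg v, norm_nonneg v']
    by_cases hv0 : v = 0
    · -- then v' = 0 and u ≠ 0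
      have hv'0 : v' = 0 := by
        rw [← norm_eq_zero, ← hv, hv0, norm_zero]
      have hu1 : ‖u‖ = 1 := by
        rw [hv0, norm_zero] at huv; nlinarith [norm_nonneg u]
      have hu0 : u ≠ 0 := by
        intro h; rw [h, norm_zero] at hu1; norm_num at hu1
      refine ⟨u⁻¹ * u', ?_, ?_, ?_⟩
      · rw [norm_mul, norm_inv, hu1, ← hu, hu1]; norm_num
      · rw [← mul_assoc, mul_inv_cancel₀ hu0, one_mul]
      · rw [hv0, hv'0, zero_mul]
    · have hv'0 : v' ≠ 0 := by
        intro h; rw [h, norm_zero] at hv; exact hv0 (norm_eq_zero.mp hv)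
      refine ⟨v⁻¹ * v', ?_, ?_, ?_⟩
      · rw [norm_mul, norm_inv, ← hv]
        exact inv_mul_cancel₀ (norm_ne_zero_iff.mpr hv0)
      · -- u' = u * (v⁻¹ * v')
        have hns : Quaternion.normSq v = Quaternion.normSq v' := by
          rw [Quaternion.normSq_eq_norm_mul_self, Quaternion.normSq_eq_norm_mul_self, hv]
        have hns' : Quaternion.normSq v' ≠ 0 := Quaternion.normSq_ne_zero.mpr hv'0
        have key : u' * ((Quaternion.normSq v' : ℝ) : ℍ[ℝ]) = u * star v * v' := by
          rw [← Quaternion.star_mul_self, ← mul_assoc, ← h1]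
        rw [← mul_assoc, Quaternion.inv_def, mul_smul_comm, smul_mul_assoc,
          mul_assoc, ← mul_assoc, hns, ← key, ← Quaternion.coe_mul_eq_smul,
          ← Quaternion.coe_commutes, ← mul_assoc, ← Quaternion.coe_mul,
          inv_mul_cancel₀ hns', Quaternion.coe_one, one_mul]
      · rw [← mul_assoc, mul_inv_cancel₀ hv0, one_mul]
  · rintro ⟨z, hz, hu, hv⟩
    have hzz : z * star z = 1 := by
      rw [Quaternion.self_mul_star]
      rw [Quaternion.normSq_eq_norm_mul_self, hz]
      norm_num
    simp only [hopf, hu, hv, Prod.mk.injEq]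
    constructor
    · rw [star_mul,
        show u * z * (star z * star v) = u * star v by
          rw [mul_assoc u z, ← mul_assoc z, hzz, one_mul]]
    · rw [norm_mul, norm_mul, hz, mul_one, mul_one]
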